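/- Let n, m ≥ 1. Let w, g ∈ ℝⁿ, let F̃ be a real n×m matrix, let u ∈ ℝᵐ, let c, h̃, δ, p, q ∈ ℝ, let e_F, e_g, e_h ≥ 0, and let α : ℝ → ℝ be monotone nondecreasing. Suppose the following four constraints hold: (i) δ − (⟨w, F̃ u⟩ + c) ≥ e_F‖w‖‖u‖; (ii) p ≥ e_g‖F̃ u‖; (iii) q ≥ (e_F‖g‖ + e_g·e_F)‖u‖; (iv) ⟨g, F̃ u⟩ + α(h̃ − e_h) ≥ p + q. Then for every real n×m matrix D with spectral norm ‖D‖ ≤ e_F, every d ∈ ℝⁿ with ‖d‖ ≤ e_g, and every t ∈ ℝ with |t| ≤ e_h, both ⟨w, (F̃ + D) u⟩ + c ≤ δ and ⟨g + d, (F̃ + D) u⟩ + α(h̃ + t) ≥ 0 hold. -/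

import Mathlib

open scoped RealInnerProductSpace

/-- The spectral norm of a real `n×m` matrix: the operator norm of the induced linear map
between Euclidean spaces. -/
noncomputable def specNorm {n m : ℕ} (A : Matrix (Fin n) (Fin m) ℝ) : ℝ :=
  ‖LinearMap.toContinuousLinearMap (Matrix.toEuclideanLin A)‖

lemma specNorm_le_bound {n m : ℕ} (A : Matrix (Fin n) (Fin m) ℝ)
    (u : EuclideanSpace ℝ (Fin m)) :
    ‖Matrix.toEuclideanLin A u‖ ≤ specNorm A * ‖u‖ := by
  have := (LinearMap.toContinuousLinearMap (Matrix.toEuclideanLin A)).le_opNorm u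
  simpa [specNorm] using this

/-- Robust CLF-CBF SOCP (Proposition 4): the four second-order cone constraints imply that
for every admissible realization of the errors, the robust stability constraint
`⟨w, (F̃ + D)u⟩ + c ≤ δ` and the robust safety constraint
`⟨g + d, (F̃ + D)u⟩ + α(h̃ + t) ≥ 0` both hold. -/
theorem stmt_8 (n m : ℕ) (hn : 1 ≤ n) (hm : 1 ≤ m)
    (w g : EuclideanSpace ℝ (Fin n)) (Ft : Matrix (Fin n) (Fin m) ℝ)
    (u : EuclideanSpace ℝ (Fin m)) (c hTilde δ p q : ℝ) (eF eg eh : ℝ)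
    (heF : 0 ≤ eF) (heg : 0 ≤ eg) (heh : 0 ≤ eh)
    (α : ℝ → ℝ) (hα : Monotone α)
    (h1 : eF * ‖w‖ * ‖u‖ ≤ δ - (⟪w, Matrix.toEuclideanLin Ft u⟫ + c))
    (h2 : eg * ‖Matrix.toEuclideanLin Ft u‖ ≤ p)
    (h3 : (eF * ‖g‖ + eg * eF) * ‖u‖ ≤ q)
    (h4 : p + q ≤ ⟪g, Matrix.toEuclideanLin Ft u⟫ + α (hTilde - eh)) :
    ∀ D : Matrix (Fin n) (Fin m) ℝ, specNorm D ≤ eF →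
      ∀ d : EuclideanSpace ℝ (Fin n), ‖d‖ ≤ eg →
        ∀ t : ℝ, |t| ≤ eh →
          ⟪w, Matrix.toEuclideanLin (Ft + D) u⟫ + c ≤ δ ∧
            0 ≤ ⟪g + d, Matrix.toEuclideanLin (Ft + D) u⟫ + α (hTilde + t) := by
  intro D hD d hd t ht
  have hsplit : Matrix.toEuclideanLin (Ft + D) u
      = Matrix.toEuclideanLin Ft u + Matrix.toEuclideanLin D u := by
    simp [map_add]
  have hDu : ‖Matrix.toEuclideanLin D u‖ ≤ eF * ‖u‖ := by
    calc ‖Matrix.toEuclideanLin D u‖ ≤ specNorm D * ‖u‖ := specNorm_le_bound D u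
      _ ≤ eF * ‖u‖ := by gcongr
  -- generic inner product bound
  have hbound : ∀ (v : EuclideanSpace ℝ (Fin n)) (x : EuclideanSpace ℝ (Fin m)),
      |⟪v, Matrix.toEuclideanLin D x⟫| ≤ specNorm D * ‖v‖ * ‖x‖ := by
    intro v x
    calc |⟪v, Matrix.toEuclideanLin D x⟫| ≤ ‖v‖ * ‖Matrix.toEuclideanLin D x‖ :=
          abs_real_inner_le_norm v _
      _ ≤ ‖v‖ * (specNorm D * ‖x‖) := by
          have := specNorm_le_bound D x
          gcongr
      _ = specNorm D * ‖v‖ * ‖x‖ := by ring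
  have hwD : |⟪w, Matrix.toEuclideanLin D u⟫| ≤ eF * ‖w‖ * ‖u‖ := by
    refine (hbound w u).trans ?_
    have : specNorm D * ‖w‖ * ‖u‖ ≤ eF * ‖w‖ * ‖u‖ := by gcongr
    exact this
  have hgD : |⟪g, Matrix.toEuclideanLin D u⟫| ≤ eF * ‖g‖ * ‖u‖ := by
    refine (hbound g u).trans ?_
    gcongr
  have hdF : |⟪d, Matrix.toEuclideanLin Ft u⟫| ≤ p := by
    calc |⟪d, Matrix.toEuclideanLin Ft u⟫| ≤ ‖d‖ * ‖Matrix.toEuclideanLin Ft u‖ :=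
          abs_real_inner_le_norm d _
      _ ≤ eg * ‖Matrix.toEuclideanLin Ft u‖ := by gcongr
      _ ≤ p := h2
  have hdD : |⟪d, Matrix.toEuclideanLin D u⟫| ≤ eg * (eF * ‖u‖) := by
    calc |⟪d, Matrix.toEuclideanLin D u⟫| ≤ ‖d‖ * ‖Matrix.toEuclideanLin D u‖ :=
          abs_real_inner_le_norm d _
      _ ≤ eg * (eF * ‖u‖) := by gcongr
  constructor
  · have := abs_le.mp hwD
    have h1' := h1
    rw [hsplit, inner_add_right]
    linarith [this.2]
  · rw [hsplit, inner_add_left, inner_add_right, inner_add_right]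
    have hα' : α (hTilde - eh) ≤ α (hTilde + t) := by
      apply hα; have := abs_le.mp ht; linarith
    have h3' : eF * ‖g‖ * ‖u‖ + eg * (eF * ‖u‖) ≤ q := by nlinarith [h3]
    have hgD' := (abs_le.mp hgD).1
    have hdF' := (abs_le.mp hdF).1
    have hdD' := (abs_le.mp hdD).1
    linarith
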